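/- Let R be a commutative ring, A a commutative R-algebra and y ∈ A (the case q = 1). Then: (1) the A-linear map δ : A⟨ω⟩_{1,y} → A⟨ω⟩_{1,y} ⊗_A A⟨ω⟩_{1,y} determined by δ(ω^{[n]}) = Σ_{i=0}^{n} ω^{[i]} ⊗ ω^{[n−i]} is a morphism of A-algebras; (2) for every k ∈ ℕ, in A[θ] ⊗_A A[θ] one has (1 ⊗ θ + θ ⊗ 1 − y θ ⊗ θ)^k = Σ_{m,n,i with m+n−i=k, 0 ≤ i ≤ m ≤ k} (−1)^i (k choose m)(m choose i) y^i θ^m ⊗ θ^n, where the binomial coefficients are the ordinary ones. -/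

import Mathlib

open TensorProduct

def qChoose {R : Type*} [CommRing R] (q : R) : ℕ → ℕ → R
  | _, 0 => 1
  | 0, _ + 1 => 0
  | n + 1, k + 1 => qChoose q n k + q ^ (k + 1) * qChoose q n (k + 1)

def dpCoeff {A : Type*} [CommRing A] (q y : A) (m n i : ℕ) : A :=
  (-1 : A) ^ i * q ^ (i * (i - 1) / 2) * qChoose q (m + n - i) m * qChoose q m i * y ^ i

open Polynomial

lemma gen {A T : Type*} [CommRing A] [CommRing T] [Algebra A T] (y : A) (u v : T) (k : ℕ) :
    (u + v - y • (v * u)) ^ k =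
      ∑ m ∈ Finset.range (k + 1), ∑ i ∈ Finset.range (m + 1),
        ((-1 : A) ^ i * (k.choose m : A) * (m.choose i : A) * y ^ i) • (v ^ m * u ^ (k - m + i)) := by
  have h1 : u + v - y • (v * u) = v * (1 - y • u) + u := by
    rw [mul_sub, mul_smul_comm]; ring
  rw [h1, add_pow]
  refine Finset.sum_congr rfl fun m hm => ?_
  rw [Finset.mem_range, Nat.lt_succ_iff] at hm
  have h2 : (1 - y • u) ^ m = ∑ i ∈ Finset.range (m + 1),
      ((-y) • u) ^ i * (m.choose i : T) := by
    have := add_pow ((-y) • u) 1 m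
    simp only [one_pow, mul_one] at this
    rw [sub_eq_add_neg, add_comm, ← neg_smul, this]
  rw [mul_pow, h2, Finset.mul_sum, Finset.sum_mul, Finset.sum_mul]
  refine Finset.sum_congr rfl fun i hi => ?_
  rw [Finset.mem_range, Nat.lt_succ_iff] at hi
  have hpow : u ^ (k - m + i) = u ^ (k - m) * u ^ i := pow_add u (k-m) i
  rw [hpow, _root_.smul_pow]
  simp only [Algebra.smul_def, map_mul, map_pow, map_neg, map_one, map_natCast]
  ring

noncomputable def dcoef {A : Type*} [CommRing A] (y : A) (k m n : ℕ) : A :=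
  ((((Polynomial.X : Polynomial (Polynomial A)) + Polynomial.C Polynomial.X
      - y • (Polynomial.C Polynomial.X * Polynomial.X)) ^ k).coeff n).coeff m

lemma dval {A : Type*} [CommRing A] (y : A) (k m n : ℕ) :
    dcoef y k m n = if m ≤ k ∧ n ≤ k ∧ k ≤ m + n then
      ((-1:A)^(m+n-k) * (k.choose m : A) * (m.choose (m+n-k) : A) * y^(m+n-k)) else 0 := by
  rw [dcoef, gen y (Polynomial.X : Polynomial (Polynomial A)) (Polynomial.C Polynomial.X) k]
  simp only [← map_pow, finset_sum_coeff, coeff_smul, coeff_C_mul, coeff_X_pow, smul_eq_mul,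
    mul_ite, mul_one, mul_zero, apply_ite (Polynomial.coeff · m), coeff_zero]
  have step : ∀ x ∈ Finset.range (k+1), (∑ j ∈ Finset.range (x+1),
      if n = k - x + j then (if m = x then (-1:A)^j * (k.choose x : A) * (x.choose j : A) * y^j else 0) else 0)
      = if m = x then (∑ j ∈ Finset.range (x+1),
        if n = k - x + j then (-1:A)^j * (k.choose x : A) * (x.choose j : A) * y^j else 0) else 0 := by
    intro x _
    split_ifs with h
    · exact Finset.sum_congr rfl fun j _ => by simp [h]
    · exact Finset.sum_eq_zero fun j _ => by simp [h]
  rw [Finset.sum_congr rfl step, Finset.sum_ite_eq]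
  simp only [Finset.mem_range, Nat.lt_succ_iff]
  by_cases hmk : m ≤ k
  · rw [if_pos hmk]
    by_cases hnk : n ≤ k
    · by_cases hkmn : k ≤ m + n
      · rw [if_pos ⟨hmk, hnk, hkmn⟩]
        rw [Finset.sum_eq_single (m + n - k)]
        · rw [if_pos (by omega)]
        · intro j _ hj
          rw [if_neg (by omega)]
        · intro hmem
          rw [Finset.mem_range, Nat.lt_succ_iff] at hmem
          omega
      · rw [if_neg (by omega)]
        exact Finset.sum_eq_zero fun j hj => by
          rw [Finset.mem_range, Nat.lt_succ_iff] at hj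
          rw [if_neg (by omega)]
    · rw [if_neg (by omega)]
      exact Finset.sum_eq_zero fun j hj => by
        rw [Finset.mem_range, Nat.lt_succ_iff] at hj
        rw [if_neg (by omega)]
  · rw [if_neg hmk, if_neg (by omega)]

lemma dconv {A : Type*} [CommRing A] (y : A) (s t m n : ℕ) :
    dcoef y (s+t) m n = ∑ i ∈ Finset.range (m+1), ∑ j ∈ Finset.range (n+1),
      dcoef y s i j * dcoef y t (m-i) (n-j) := by
  simp only [dcoef, pow_add, coeff_mul, finset_sum_coeff,
    Finset.Nat.sum_antidiagonal_eq_sum_range_succ_mk]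
  rw [Finset.sum_comm]

lemma qChoose_one {A : Type*} [CommRing A] : ∀ n k : ℕ, qChoose (1:A) n k = (n.choose k : A)
  | _, 0 => by simp [qChoose]
  | 0, k + 1 => by simp [qChoose]
  | n + 1, k + 1 => by
    rw [qChoose, qChoose_one n k, qChoose_one n (k+1), Nat.choose_succ_succ]
    push_cast; ring

lemma sum_dcoef_eq {A B : Type*} [CommRing A] [CommRing B] [Algebra A B] (y : A)
    (b : ℕ → B) (m n : ℕ) :
    ∑ k ∈ Finset.range (m+n+1), dcoef y k m n • b k
      = ∑ i ∈ Finset.range (min m n + 1), dpCoeff (1:A) y m n i • b (m+n-i) := by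
  have hsub : (Finset.range (min m n + 1)).image (fun i => m + n - i) ⊆ Finset.range (m+n+1) := by
    intro k hk
    simp only [Finset.mem_image, Finset.mem_range, Nat.lt_succ_iff] at hk ⊢
    obtain ⟨i, hi, rfl⟩ := hk; omega
  have hzero : ∀ k ∈ Finset.range (m+n+1),
      k ∉ (Finset.range (min m n + 1)).image (fun i => m + n - i) →
      dcoef y k m n • b k = 0 := by
    intro k hk hk'
    simp only [Finset.mem_image, Finset.mem_range, Nat.lt_succ_iff] at hk hk'
    have hd : dcoef y k m n = 0 := by
      rw [dval, if_neg]
      intro h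
      exact hk' ⟨m + n - k, by omega, by omega⟩
    rw [hd, zero_smul]
  rw [← Finset.sum_subset hsub hzero,
    Finset.sum_image (fun i hi j hj h => by
      simp only [Finset.mem_coe, Finset.mem_range, Nat.lt_succ_iff] at hi hj
      omega)]
  refine Finset.sum_congr rfl fun i hi => ?_
  simp only [Finset.mem_range, Nat.lt_succ_iff] at hi
  rw [dval, if_pos (by omega)]
  congr 1
  have h1 : m + n - (m + n - i) = i := by omega
  rw [h1, dpCoeff, qChoose_one, qChoose_one, one_pow, mul_one]

lemma triangle {M : Type*} [AddCommMonoid M] (N : ℕ) (h : ℕ → ℕ → M)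
    (H : ∀ s t : ℕ, N < s + t → h s t = 0) :
    ∑ k ∈ Finset.range (N+1), ∑ s ∈ Finset.range (k+1), h s (k-s)
      = ∑ s ∈ Finset.range (N+1), ∑ t ∈ Finset.range (N+1), h s t := by
  rw [Finset.sum_range_diag_flip (N+1) h]
  refine Finset.sum_congr rfl fun s hs => ?_
  simp only [Finset.mem_range, Nat.lt_succ_iff] at hs
  refine Finset.sum_subset (fun t ht => ?_) (fun t ht ht' => ?_)
  · simp only [Finset.mem_range] at ht ⊢; omega
  · simp only [Finset.mem_range] at ht ht'
    exact H s t (by omega)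

lemma sum4 {M : Type*} [AddCommMonoid M] (S T U V : Finset ℕ) (f : ℕ → ℕ → ℕ → ℕ → M) :
    ∑ i ∈ S, ∑ j ∈ T, ∑ s ∈ U, ∑ t ∈ V, f i j s t
      = ∑ s ∈ U, ∑ t ∈ V, ∑ i ∈ S, ∑ j ∈ T, f i j s t :=
  calc ∑ i ∈ S, ∑ j ∈ T, ∑ s ∈ U, ∑ t ∈ V, f i j s t
      = ∑ i ∈ S, ∑ s ∈ U, ∑ j ∈ T, ∑ t ∈ V, f i j s t :=
        Finset.sum_congr rfl fun i _ => Finset.sum_comm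
    _ = ∑ s ∈ U, ∑ i ∈ S, ∑ j ∈ T, ∑ t ∈ V, f i j s t := Finset.sum_comm
    _ = ∑ s ∈ U, ∑ i ∈ S, ∑ t ∈ V, ∑ j ∈ T, f i j s t :=
        Finset.sum_congr rfl fun s _ => Finset.sum_congr rfl fun i _ => Finset.sum_comm
    _ = ∑ s ∈ U, ∑ t ∈ V, ∑ i ∈ S, ∑ j ∈ T, f i j s t :=
        Finset.sum_congr rfl fun s _ => Finset.sum_comm

lemma keymult {A B : Type*} [CommRing A] [CommRing B] [Algebra A B] (y : A) (b : Module.Basis ℕ A B)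
    (hb' : ∀ m n : ℕ, b m * b n = ∑ k ∈ Finset.range (m+n+1), dcoef y k m n • b k)
    (δ₀ : B →ₗ[A] B ⊗[A] B)
    (hδ : ∀ n : ℕ, δ₀ (b n) = ∑ i ∈ Finset.range (n+1), b i ⊗ₜ[A] b (n-i))
    (m n : ℕ) : δ₀ (b m * b n) = δ₀ (b m) * δ₀ (b n) := by
  have hz : ∀ s t : ℕ, m + n < s + t → dcoef y (s+t) m n • (b s ⊗ₜ[A] b t) = 0 := by
    intro s t hst
    rw [dval, if_neg (by omega), zero_smul]
  have lhs_eq : δ₀ (b m * b n) = ∑ s ∈ Finset.range (m+n+1), ∑ t ∈ Finset.range (m+n+1),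
      dcoef y (s+t) m n • (b s ⊗ₜ[A] b t) := by
    rw [hb' m n, map_sum]
    simp only [map_smul, hδ, Finset.smul_sum]
    rw [← triangle (m+n) (fun s t => dcoef y (s+t) m n • (b s ⊗ₜ[A] b t)) hz]
    refine Finset.sum_congr rfl fun k hk => Finset.sum_congr rfl fun s hs => ?_
    simp only [Finset.mem_range, Nat.lt_succ_iff] at hs
    congr 2
    omega
  rw [lhs_eq, hδ, hδ, Finset.sum_mul_sum]
  simp only [Algebra.TensorProduct.tmul_mul_tmul]
  have ext1 : ∀ p q : ℕ, p + q ≤ m + n →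
      (∑ s ∈ Finset.range (p+q+1), dcoef y s p q • b s)
        = ∑ s ∈ Finset.range (m+n+1), dcoef y s p q • b s := by
    intro p q h
    refine Finset.sum_subset (Finset.range_subset_range.2 (by omega)) fun s hs hs' => ?_
    simp only [Finset.mem_range, Nat.lt_succ_iff] at hs hs'
    rw [dval, if_neg (by omega), zero_smul]
  have rhs_eq : ∀ i ∈ Finset.range (m+1), ∀ j ∈ Finset.range (n+1),
      (b i * b j) ⊗ₜ[A] (b (m-i) * b (n-j))
        = ∑ s ∈ Finset.range (m+n+1), ∑ t ∈ Finset.range (m+n+1),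
            (dcoef y s i j * dcoef y t (m-i) (n-j)) • (b s ⊗ₜ[A] b t) := by
    intro i hi j hj
    simp only [Finset.mem_range, Nat.lt_succ_iff] at hi hj
    rw [hb' i j, hb' (m-i) (n-j), ext1 i j (by omega), ext1 (m-i) (n-j) (by omega),
      TensorProduct.sum_tmul]
    refine Finset.sum_congr rfl fun s hs => ?_
    rw [TensorProduct.tmul_sum]
    refine Finset.sum_congr rfl fun t ht => ?_
    simp only [TensorProduct.smul_tmul', TensorProduct.tmul_smul, smul_smul]
    rw [mul_comm (dcoef y t (m - i) (n - j))]
  rw [Finset.sum_congr rfl fun i hi => Finset.sum_congr rfl fun j hj => rhs_eq i hi j hj]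
  rw [sum4]
  refine Finset.sum_congr rfl fun s hs => Finset.sum_congr rfl fun t ht => ?_
  simp only [← Finset.sum_smul]
  rw [← dconv]

/-- For `q = 1`: (1) on the divided power polynomial ring `B = A⟨ω⟩_{1,y}` (basis `b` with the
divided power multiplication rule), the `A`-linear map `δ` with
`δ(ω^{[n]}) = Σ_{i≤n} ω^{[i]} ⊗ ω^{[n−i]}` is a morphism of `A`-algebras; (2) in
`A[θ] ⊗_A A[θ]` one has, for every `k`,
`(1 ⊗ θ + θ ⊗ 1 − yθ ⊗ θ)^k = Σ_{m+n−i=k, 0≤i≤m≤k} (−1)^i (k choose m)(m choose i) y^i θ^m ⊗ θ^n`. -/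
theorem statement7 {R A B : Type*} [CommRing R] [CommRing A] [Algebra R A]
    [CommRing B] [Algebra A B] (y : A)
    (b : Module.Basis ℕ A B)
    (hb : ∀ m n : ℕ, b m * b n = ∑ i ∈ Finset.range (min m n + 1),
      dpCoeff (1 : A) y m n i • b (m + n - i)) :
    (∃ δ : B →ₐ[A] B ⊗[A] B,
      ∀ n : ℕ, δ (b n) = ∑ i ∈ Finset.range (n + 1), b i ⊗ₜ[A] b (n - i)) ∧
    (∀ k : ℕ,
      ((1 : Polynomial A) ⊗ₜ[A] (Polynomial.X : Polynomial A) +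
          (Polynomial.X : Polynomial A) ⊗ₜ[A] (1 : Polynomial A) -
          y • ((Polynomial.X : Polynomial A) ⊗ₜ[A] (Polynomial.X : Polynomial A))) ^ k =
        ∑ m ∈ Finset.range (k + 1), ∑ i ∈ Finset.range (m + 1),
          ((-1 : A) ^ i * (k.choose m : A) * (m.choose i : A) * y ^ i) •
            (((Polynomial.X : Polynomial A) ^ m) ⊗ₜ[A]
              ((Polynomial.X : Polynomial A) ^ (k - m + i)))) := by
  have hb' : ∀ m n : ℕ, b m * b n = ∑ k ∈ Finset.range (m+n+1), dcoef y k m n • b k := by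
    intro m n
    rw [hb m n]
    exact (sum_dcoef_eq y b m n).symm
  constructor
  · set δ₀ : B →ₗ[A] B ⊗[A] B :=
      b.constr A fun n => ∑ i ∈ Finset.range (n+1), b i ⊗ₜ[A] b (n-i) with hδ₀
    have hδ : ∀ n : ℕ, δ₀ (b n) = ∑ i ∈ Finset.range (n+1), b i ⊗ₜ[A] b (n-i) :=
      fun n => b.constr_basis A _ n
    have hone : b 0 = 1 := by
      have h0 : LinearMap.mulLeft A (b 0) = LinearMap.id := by
        refine b.ext fun n => ?_
        simp only [LinearMap.mulLeft_apply, LinearMap.id_coe, id_eq]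
        rw [hb 0 n, show min 0 n + 1 = 1 by omega, Finset.sum_range_one]
        simp [dpCoeff, qChoose_one]
      have h1 := LinearMap.congr_fun h0 (1 : B)
      simpa using h1
    have h1 : ∀ m : ℕ, ∀ z : B, δ₀ (b m * z) = δ₀ (b m) * δ₀ z := by
      intro m
      have hcomp : δ₀ ∘ₗ LinearMap.mulLeft A (b m) = LinearMap.mulLeft A (δ₀ (b m)) ∘ₗ δ₀ :=
        b.ext fun n => by simpa using keymult y b hb' δ₀ hδ m n
      intro z
      simpa using LinearMap.congr_fun hcomp z
    have hmul : ∀ x z : B, δ₀ (x * z) = δ₀ x * δ₀ z := by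
      intro x z
      have hcomp : δ₀ ∘ₗ LinearMap.mulRight A z = LinearMap.mulRight A (δ₀ z) ∘ₗ δ₀ :=
        b.ext fun mm => by simpa using h1 mm z
      simpa using LinearMap.congr_fun hcomp x
    have honemap : δ₀ 1 = 1 := by
      rw [← hone, hδ 0, Finset.sum_range_one, hone, Algebra.TensorProduct.one_def]
    exact ⟨AlgHom.ofLinearMap δ₀ honemap hmul, hδ⟩
  · intro k
    have e0 : (1:Polynomial A) ⊗ₜ[A] (Polynomial.X : Polynomial A)
        + (Polynomial.X : Polynomial A) ⊗ₜ[A] (1:Polynomial A)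
        - y • ((Polynomial.X : Polynomial A) ⊗ₜ[A] (Polynomial.X : Polynomial A))
        = (1:Polynomial A) ⊗ₜ[A] (Polynomial.X : Polynomial A)
        + (Polynomial.X : Polynomial A) ⊗ₜ[A] (1:Polynomial A)
        - y • (((Polynomial.X : Polynomial A) ⊗ₜ[A] (1:Polynomial A))
            * ((1:Polynomial A) ⊗ₜ[A] (Polynomial.X : Polynomial A))) := by
      rw [Algebra.TensorProduct.tmul_mul_tmul, one_mul, mul_one]
    rw [e0, gen y ((1:Polynomial A) ⊗ₜ[A] (Polynomial.X : Polynomial A))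
      ((Polynomial.X : Polynomial A) ⊗ₜ[A] (1:Polynomial A)) k]
    refine Finset.sum_congr rfl fun m _ => Finset.sum_congr rfl fun i _ => ?_
    rw [Algebra.TensorProduct.tmul_pow, Algebra.TensorProduct.tmul_pow, one_pow, one_pow,
      Algebra.TensorProduct.tmul_mul_tmul, mul_one, one_mul]
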